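/- For every nonnegative integer n, reals ν ≥ 0, u, a, and α > 0: ∫_{-∞}^{∞} L_n^{(ν)}(x + a, u) exp(-α x²) dx = √(π/α) · (Γ(n+ν+1)/n!) · ∑_{k=0}^{n} C(n,k) (-a)^k Q_{n-k}^{(k+ν)}(u, 1/(4α)). -/

import Mathlib

open Real MeasureTheory Finset Nat

lemma Gamma_nat_add_half (m : ℕ) :
    Real.Gamma (m + 1/2) = Real.sqrt π * (2*m)! / (4^m * m !) := by
  induction m with
  | zero => simpa using Real.Gamma_one_half_eq
  | succ m ih =>
    have h : ((m:ℝ)+1) + 1/2 = (m + 1/2) + 1 := by ring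
    push_cast
    rw [h, Real.Gamma_add_one (by positivity), ih]
    have h2 : (2*(m+1))! = (2*m+2) * ((2*m+1) * (2*m)!) := by
      have : 2*(m+1) = (2*m+1)+1 := by ring
      rw [this, Nat.factorial_succ, Nat.factorial_succ]
    rw [h2, Nat.factorial_succ]
    field_simp
    push_cast
    ring

lemma integrable_pow_mul_gauss {b : ℝ} (hb : 0 < b) (j : ℕ) :
    Integrable (fun x : ℝ => x ^ j * Real.exp (-b * x ^ 2)) := by
  have := integrable_rpow_mul_exp_neg_mul_sq hb (s := j)
    (lt_of_lt_of_le (by norm_num) (Nat.cast_nonneg j))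
  simpa [Real.rpow_natCast] using this

lemma moment_odd {b : ℝ} (m : ℕ) :
    ∫ x : ℝ, x ^ (2*m+1) * Real.exp (-b * x ^ 2) = 0 := by
  have h := MeasureTheory.integral_neg_eq_self
    (fun x : ℝ => x ^ (2*m+1) * Real.exp (-b * x ^ 2)) volume
  have h2 : ∀ x : ℝ, (-x) ^ (2*m+1) * Real.exp (-b * (-x) ^ 2)
      = -(x ^ (2*m+1) * Real.exp (-b * x ^ 2)) := by
    intro x; rw [Odd.neg_pow ⟨m, by ring⟩, neg_sq]; ring
  simp only [h2, MeasureTheory.integral_neg] at h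
  linarith

lemma moment_even {b : ℝ} (hb : 0 < b) (m : ℕ) :
    ∫ x : ℝ, x ^ (2*m) * Real.exp (-b * x ^ 2)
      = Real.sqrt (π / b) * (2*m)! / ((m ! : ℝ) * (4*b)^m) := by
  have hint := integrable_pow_mul_gauss hb (2*m)
  have hIoi : ∫ x in Set.Ioi (0:ℝ), x ^ (2*m) * Real.exp (-b * x ^ 2)
      = b ^ (-(((2*m:ℕ):ℝ) + 1)/2) * (1/2) * Real.Gamma ((m:ℝ) + 1/2) := by
    have := integral_rpow_mul_exp_neg_mul_rpow (p := 2) (q := ((2*m:ℕ):ℝ))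
      (by norm_num) (lt_of_lt_of_le (by norm_num) (Nat.cast_nonneg _)) hb
    rw [show (((2*m:ℕ):ℝ) + 1)/2 = (m:ℝ) + 1/2 by push_cast; ring] at this
    rw [← this]
    refine setIntegral_congr_fun measurableSet_Ioi (fun x hx => ?_)
    rw [Real.rpow_natCast, Real.rpow_two]
  have hIic : ∫ x in Set.Iic (0:ℝ), x ^ (2*m) * Real.exp (-b * x ^ 2)
      = ∫ x in Set.Ioi (0:ℝ), x ^ (2*m) * Real.exp (-b * x ^ 2) := by
    rw [← neg_zero, ← integral_comp_neg_Iic, neg_zero]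
    refine setIntegral_congr_fun measurableSet_Iic (fun x hx => ?_)
    rw [neg_pow, neg_sq]
    simp [pow_mul]
  have hsplit := intervalIntegral.integral_Iic_add_Ioi (b := (0:ℝ)) hint.integrableOn hint.integrableOn
  rw [← hsplit, hIic, hIoi, _root_.Gamma_nat_add_half]
  have hb' : Real.sqrt b ≠ 0 := by positivity
  have h1 : (b:ℝ) ^ (-(((2*m:ℕ):ℝ) + 1)/2) = (Real.sqrt b)⁻¹ * ((b:ℝ)^m)⁻¹ := by
    rw [show (-(((2*m:ℕ):ℝ) + 1)/2) = (-(1/2)) + (-(m:ℝ)) by push_cast; ring,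
      Real.rpow_add hb, Real.rpow_neg hb.le, Real.rpow_neg hb.le, Real.rpow_natCast]
    congr 1
    rw [Real.rpow_div_two_eq_sqrt _ hb.le, Real.rpow_one]
  rw [h1, Real.sqrt_div pi_pos.le, mul_pow]
  have hbm : (b:ℝ)^m ≠ 0 := by positivity
  have hm : (m ! : ℝ) ≠ 0 := by positivity
  field_simp
  ring

lemma sum_even_vanish (f : ℕ → ℝ) (hodd : ∀ m : ℕ, f (2*m+1) = 0) (k : ℕ) :
    ∑ j ∈ Finset.range (k+1), f j = ∑ m ∈ Finset.range (k/2+1), f (2*m) := by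
  rw [← Finset.sum_filter_of_ne (p := fun j => Even j)
    (by intro x hx hfx
        by_contra hev
        obtain ⟨m, hm⟩ := Nat.not_even_iff_odd.mp hev
        rw [hm] at hfx
        exact hfx (hodd m))]
  refine Finset.sum_nbij' (i := fun j => j / 2) (j := fun m => 2*m) ?_ ?_ ?_ ?_ ?_
  all_goals
    intro x hx
    simp only [Finset.mem_filter, Finset.mem_range, Nat.even_iff] at hx ⊢
  · omega
  · omega
  · omega
  · omega
  · congr 1; omega

lemma sum_reindex (n : ℕ) (F : ℕ → ℕ → ℝ) :
    ∑ k ∈ Finset.range (n+1), ∑ m ∈ Finset.range (k/2+1), F k m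
      = ∑ i ∈ Finset.range (n+1), ∑ m ∈ Finset.range ((n-i)/2+1), F (i+2*m) m := by
  rw [Finset.sum_sigma', Finset.sum_sigma']
  refine Finset.sum_nbij' (i := fun p => ⟨p.1 - 2*p.2, p.2⟩) (j := fun p => ⟨p.1 + 2*p.2, p.2⟩)
    ?_ ?_ ?_ ?_ ?_
  · rintro ⟨k, m⟩ hx
    simp only [Finset.mem_sigma, Finset.mem_range] at hx ⊢
    omega
  · rintro ⟨k, m⟩ hx
    simp only [Finset.mem_sigma, Finset.mem_range] at hx ⊢
    omega
  · rintro ⟨k, m⟩ hx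
    simp only [Finset.mem_sigma, Finset.mem_range] at hx
    have : k - 2*m + 2*m = k := by omega
    simp [this]
  · rintro ⟨k, m⟩ hx
    simp only [Finset.mem_sigma, Finset.mem_range] at hx
    have : k + 2*m - 2*m = k := by omega
    simp [this]
  · rintro ⟨k, m⟩ hx
    simp only [Finset.mem_sigma, Finset.mem_range] at hx
    have : k - 2*m + 2*m = k := by omega
    simp [this]

lemma term_eq (n i m : ℕ) (ν u a α : ℝ) (hν : 0 ≤ ν) (hα : 0 < α) (h : i + 2*m ≤ n) :
    Real.Gamma (↑n + ν + 1) * ((-1:ℝ)^(i+2*m) * u^(n-(i+2*m)) /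
        (↑(n-(i+2*m))! * ↑(i+2*m)! * Real.Gamma (↑(i+2*m) + ν + 1))) *
      (a^((i+2*m)-2*m) * ((i+2*m).choose (2*m) : ℝ)) *
      (Real.sqrt (π/α) * ↑(2*m)! / (↑m ! * (4*α)^m))
    = Real.sqrt (π/α) * (Real.Gamma (↑n+ν+1) / ↑n !) *
        ((n.choose i : ℝ) * (-a)^i * (↑(n-i)! * (u^(n-i-2*m) * (1/(4*α))^m /
          (↑(n-i-2*m)! * ↑m ! * Real.Gamma (2*↑m + (↑i+ν) + 1))))) := by
  have e1 : (i+2*m)-2*m = i := by omega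
  have e2 : n-(i+2*m) = n-i-2*m := by omega
  have hG : Real.Gamma (↑(i+2*m) + ν + 1) = Real.Gamma (2*↑m + (↑i+ν) + 1) := by
    congr 1; push_cast; ring
  rw [e1, e2, hG, Nat.cast_choose ℝ (show 2*m ≤ i+2*m by omega),
    Nat.cast_choose ℝ (show i ≤ n by omega), e1]
  have hs : ((-1:ℝ))^(i+2*m) = (-1)^i := by
    rw [pow_add, pow_mul]; norm_num
  rw [hs, neg_pow a i]
  have g1 : Real.Gamma (2*↑m + (↑i+ν) + 1) ≠ 0 := by
    have : (0:ℝ) < 2*↑m + (↑i+ν) + 1 := by positivity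
    exact (Real.Gamma_pos_of_pos this).ne'
  have f1 : ((n-i-2*m)! : ℝ) ≠ 0 := Nat.cast_ne_zero.mpr (Nat.factorial_ne_zero _)
  have f2 : ((m)! : ℝ) ≠ 0 := Nat.cast_ne_zero.mpr (Nat.factorial_ne_zero _)
  have f3 : ((2*m)! : ℝ) ≠ 0 := Nat.cast_ne_zero.mpr (Nat.factorial_ne_zero _)
  have f4 : ((i)! : ℝ) ≠ 0 := Nat.cast_ne_zero.mpr (Nat.factorial_ne_zero _)
  have f5 : ((n)! : ℝ) ≠ 0 := Nat.cast_ne_zero.mpr (Nat.factorial_ne_zero _)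
  have f6 : ((n-i)! : ℝ) ≠ 0 := Nat.cast_ne_zero.mpr (Nat.factorial_ne_zero _)
  have f7 : ((i+2*m)! : ℝ) ≠ 0 := Nat.cast_ne_zero.mpr (Nat.factorial_ne_zero _)
  have hα4 : (4*α) ≠ 0 := by positivity
  have hα4m : ((4*α))^m ≠ 0 := by positivity
  field_simp
  rw [one_div, inv_pow, mul_inv_cancel_right₀ (by positivity)]

/-- Two-variable associated Laguerre polynomial `L_n^{(ν)}(x,y)`. -/
noncomputable def Lassoc (ν : ℝ) (n : ℕ) (x y : ℝ) : ℝ :=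
  Real.Gamma (n + ν + 1) * ∑ k ∈ Finset.range (n + 1),
    (-1 : ℝ) ^ k * x ^ k * y ^ (n - k) /
      (((n - k)! : ℝ) * (k ! : ℝ) * Real.Gamma (k + ν + 1))

/-- The polynomials `Q_n^{(ν)}(x,y)`. -/
noncomputable def Qpoly (ν : ℝ) (n : ℕ) (x y : ℝ) : ℝ :=
  (n ! : ℝ) * ∑ k ∈ Finset.range (n / 2 + 1),
    x ^ (n - 2 * k) * y ^ k /
      (((n - 2 * k)! : ℝ) * (k ! : ℝ) * Real.Gamma (2 * k + ν + 1))

theorem assoc_laguerre_shifted_gaussian_integral (n : ℕ) (ν : ℝ) (hν : 0 ≤ ν)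
    (u a α : ℝ) (hα : 0 < α) :
    ∫ x : ℝ, Lassoc ν n (x + a) u * Real.exp (-α * x ^ 2) =
      Real.sqrt (π / α) * (Real.Gamma (n + ν + 1) / (n ! : ℝ)) *
        ∑ k ∈ Finset.range (n + 1),
          (n.choose k : ℝ) * (-a) ^ k * Qpoly (k + ν) (n - k) u (1 / (4 * α)) := by
  classical
  set C : ℕ → ℕ → ℝ := fun k j =>
    Real.Gamma (n+ν+1) * ((-1:ℝ)^k * u^(n-k) /
      (((n-k)! : ℝ) * (k ! : ℝ) * Real.Gamma (k+ν+1))) *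
      (a^(k-j) * (k.choose j : ℝ)) with hC
  have key : (fun x : ℝ => Lassoc ν n (x + a) u * Real.exp (-α * x ^ 2)) =
      fun x => ∑ p ∈ (Finset.range (n+1)).sigma (fun k => Finset.range (k+1)),
        C p.1 p.2 * (x ^ p.2 * Real.exp (-α * x ^ 2)) := by
    funext x
    rw [Finset.sum_sigma]
    simp only [Lassoc, Finset.sum_mul, Finset.mul_sum]
    refine Finset.sum_congr rfl fun k hk => ?_
    rw [add_pow]
    simp only [Finset.sum_mul, Finset.mul_sum, Finset.sum_div]
    refine Finset.sum_congr rfl fun j hj => ?_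
    simp only [hC]
    ring
  rw [key, MeasureTheory.integral_finset_sum _
    (fun p _ => ((integrable_pow_mul_gauss hα p.2).const_mul _))]
  simp only [MeasureTheory.integral_const_mul]
  rw [Finset.sum_sigma]
  have inner : ∀ k, ∑ j ∈ Finset.range (k+1),
        C k j * (∫ x : ℝ, x ^ j * Real.exp (-α * x ^ 2))
      = ∑ m ∈ Finset.range (k/2+1),
          C k (2*m) * (Real.sqrt (π/α) * (((2*m)! : ℝ)) / ((m ! : ℝ) * (4*α)^m)) := by
    intro k
    rw [sum_even_vanish (fun j => C k j * (∫ x : ℝ, x ^ j * Real.exp (-α * x ^ 2)))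
      (fun m => by beta_reduce; rw [moment_odd m, mul_zero]) k]
    exact Finset.sum_congr rfl fun m _ => by rw [moment_even hα m, mul_div_assoc]
  simp only [inner]
  rw [sum_reindex n (fun k m => C k (2*m) *
    (Real.sqrt (π/α) * (((2*m)! : ℝ)) / ((m ! : ℝ) * (4*α)^m))), Finset.mul_sum]
  refine Finset.sum_congr rfl fun i hi => ?_
  simp only [Finset.mem_range] at hi
  have hin : i ≤ n := by omega
  simp only [Qpoly, Finset.mul_sum]
  refine Finset.sum_congr rfl fun m hm => ?_
  simp only [Finset.mem_range] at hm
  have h2m : i + 2*m ≤ n := by omega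
  simp only [hC]
  exact term_eq n i m ν u a α hν hα h2m
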